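/- Let q ≥ 2 be an integer, ρ ∈ (0,1), and let α = (α_1,…,α_q) be a feasible vector. If there exist indices 1 ≤ i and k ≥ 2 with i+k ≤ q such that α_i > 0 and α_{i+k} > 0, then there exists a feasible vector α' with Σ_{j=1}^q α'_j·log₂ j > Σ_{j=1}^q α_j·log₂ j; in particular α does not maximize the objective Σ_{j=1}^q α_j·log₂ j over feasible vectors. -/
import Mathlib


/-- A vector `α = (α 1, …, α q)` (indexed `1,…,q`) is feasible for `q` and `ρ` if all
entries are nonnegative, they sum to `1`, and `Σ_{i=1}^q i·α_i = 2/ρ − 1`. -/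
def Feasible (q : ℕ) (ρ : ℝ) (α : ℕ → ℝ) : Prop :=
  (∀ i ∈ Finset.Icc 1 q, 0 ≤ α i) ∧
  (∑ i ∈ Finset.Icc 1 q, α i = 1) ∧
  (∑ i ∈ Finset.Icc 1 q, (i : ℝ) * α i = 2 / ρ - 1)

/-- The objective `Σ_{i=1}^q α_i · log₂ i`. -/
noncomputable def objective (q : ℕ) (α : ℕ → ℝ) : ℝ :=
  ∑ i ∈ Finset.Icc 1 q, α i * Real.logb 2 i

theorem stmt10 (q : ℕ) (hq : 2 ≤ q) (ρ : ℝ) (hρ : ρ ∈ Set.Ioo (0 : ℝ) 1)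
    (α : ℕ → ℝ) (hα : Feasible q ρ α)
    (i k : ℕ) (hi : 1 ≤ i) (hk : 2 ≤ k) (hik : i + k ≤ q)
    (hαi : 0 < α i) (hαik : 0 < α (i + k)) :
    (∃ α' : ℕ → ℝ, Feasible q ρ α' ∧ objective q α < objective q α') ∧
    ¬ (∀ β : ℕ → ℝ, Feasible q ρ β → objective q β ≤ objective q α) := by
  obtain ⟨hpos, hsum, hmean⟩ := hα
  set ε := min (α i) (α (i+k)) with hεdef
  have hε0 : 0 < ε := lt_min hαi hαik
  set δ : ℕ → ℝ := fun j =>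
    (if j = i+1 then (1:ℝ) else 0) + (if j = i+k-1 then 1 else 0)
    - (if j = i then 1 else 0) - (if j = i+k then 1 else 0) with hδdef
  set α' : ℕ → ℝ := fun j => α j + ε * δ j with hα'def
  have hmi : i ∈ Finset.Icc 1 q := by simp [Finset.mem_Icc]; omega
  have hmi1 : i+1 ∈ Finset.Icc 1 q := by simp [Finset.mem_Icc]; omega
  have hmik1 : i+k-1 ∈ Finset.Icc 1 q := by simp [Finset.mem_Icc]; omega
  have hmik : i+k ∈ Finset.Icc 1 q := by simp [Finset.mem_Icc]; omega
  have sumδ : ∀ f : ℕ → ℝ, ∑ j ∈ Finset.Icc 1 q, f j * δ j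
      = f (i+1) + f (i+k-1) - f i - f (i+k) := by
    intro f
    simp only [hδdef, mul_add, mul_sub, mul_ite, mul_one, mul_zero]
    rw [Finset.sum_sub_distrib, Finset.sum_sub_distrib, Finset.sum_add_distrib]
    simp [Finset.sum_ite_eq', hmi, hmi1, hmik1, hmik]
  have sum1 : ∑ j ∈ Finset.Icc 1 q, δ j = 0 := by
    have := sumδ (fun _ => 1); simpa using this
  have c1 : ((i+k-1 : ℕ) : ℝ) = (i:ℝ) + k - 1 := by
    have h' : (i+k-1 : ℕ) = i + (k-1) := by omega
    rw [h']; push_cast [Nat.cast_sub (show 1 ≤ k by omega)]; ring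
  have sum2 : ∑ j ∈ Finset.Icc 1 q, (j:ℝ) * δ j = 0 := by
    have := sumδ (fun j => (j:ℝ))
    rw [this, c1]; push_cast; ring
  have sum3 : ∑ j ∈ Finset.Icc 1 q, δ j * Real.logb 2 j
      = Real.logb 2 ((i+1 : ℕ)) + Real.logb 2 ((i+k-1 : ℕ)) - Real.logb 2 (i : ℕ) - Real.logb 2 ((i+k : ℕ)) := by
    have := sumδ (fun j => Real.logb 2 j)
    simp only [mul_comm] at this ⊢
    rw [this]
  have main : ∃ α' : ℕ → ℝ, Feasible q ρ α' ∧ objective q α < objective q α' := by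
    refine ⟨α', ⟨?_, ?_, ?_⟩, ?_⟩
    · intro j hj
      simp only [hα'def]
      have hd : δ j = (if j = i+1 then (1:ℝ) else 0) + (if j = i+k-1 then 1 else 0)
          - (if j = i then 1 else 0) - (if j = i+k then 1 else 0) := by
        simp [hδdef]
      by_cases h1 : j = i
      · have hdj : δ j = -1 := by
          rw [hd, if_neg (show j ≠ i+1 by omega), if_neg (show j ≠ i+k-1 by omega),
            if_pos h1, if_neg (show j ≠ i+k by omega)]
          ring
        rw [hdj, h1]
        have : ε ≤ α i := min_le_left _ _
        linarith
      · by_cases h2 : j = i+k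
        · have hdj : δ j = -1 := by
            rw [hd, if_neg (show j ≠ i+1 by omega), if_neg (show j ≠ i+k-1 by omega),
              if_neg h1, if_pos h2]
            ring
          rw [hdj, h2]
          have : ε ≤ α (i+k) := min_le_right _ _
          linarith
        · have hdj : 0 ≤ δ j := by
            rw [hd, if_neg h1, if_neg h2]
            split_ifs <;> norm_num
          have := hpos j hj
          nlinarith
    · simp only [hα'def]
      rw [Finset.sum_add_distrib, hsum, ← Finset.mul_sum, sum1]
      ring
    · simp only [hα'def]
      have : ∀ j ∈ Finset.Icc 1 q, (j:ℝ) * (α j + ε * δ j) = (j:ℝ) * α j + ε * ((j:ℝ) * δ j) := by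
        intro j _; ring
      rw [Finset.sum_congr rfl this, Finset.sum_add_distrib, hmean, ← Finset.mul_sum, sum2]
      ring
    · simp only [objective, hα'def]
      have : ∀ j ∈ Finset.Icc 1 q, (α j + ε * δ j) * Real.logb 2 j
          = α j * Real.logb 2 j + ε * (δ j * Real.logb 2 j) := by intro j _; ring
      rw [Finset.sum_congr rfl this, Finset.sum_add_distrib, ← Finset.mul_sum, sum3]
      have hi0 : (0:ℝ) < i := by exact_mod_cast hi
      have hk2 : (2:ℝ) ≤ (k:ℝ) := by exact_mod_cast hk
      have hlog : Real.logb 2 ((i:ℕ)) + Real.logb 2 ((i+k : ℕ)) < Real.logb 2 ((i+1 : ℕ)) + Real.logb 2 ((i+k-1 : ℕ)) := by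
        rw [c1]
        push_cast
        rw [← Real.logb_mul (by positivity) (by positivity),
            ← Real.logb_mul (by positivity) (by linarith)]
        apply Real.logb_lt_logb (by norm_num)
        · positivity
        · nlinarith
      nlinarith
  refine ⟨main, ?_⟩
  intro h
  obtain ⟨β, hβf, hβ⟩ := main
  exact absurd (h β hβf) (not_le.mpr hβ)
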